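/- Let f : ℝ → ℝ be continuous and 2π-periodic with Fourier coefficients c_k := (1/2π)∫₀^{2π} f(α)e^{-ikα} dα, and let 𝔠 : ℓ²(ℤ,ℂ) → ℓ²(ℤ,ℂ) be the bounded operator (𝔠u)_m := ∑_{n∈ℤ} c_{m−n} u_n. Then 𝔠 is self-adjoint and its spectrum equals the range of f: σ(𝔠) = f([0,2π]). -/

import Mathlib

open scoped Real ENNReal ComplexConjugate
open MeasureTheory

noncomputable section Stmt14Aux

namespace Stmt14

variable {X : Type*} [MeasurableSpace X] {μ : Measure X}

lemma memLp_mul (φ : X → ℂ) (hφ : MemLp φ ∞ μ) (g : Lp ℂ 2 μ) :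
    MemLp (fun x => φ x * (g : X → ℂ) x) 2 μ := by
  have h := (Lp.memLp g).smul hφ (p := ∞) (q := 2) (r := 2)
  rw [show (fun x => φ x * (g : X → ℂ) x) = φ * (g : X → ℂ) from rfl]
  simpa [Pi.smul_apply, smul_eq_mul] using h

/-- Multiplication by a bounded function as a continuous linear map on `L²`. -/
def mulLp (φ : X → ℂ) (hφ : MemLp φ ∞ μ) : Lp ℂ 2 μ →L[ℂ] Lp ℂ 2 μ :=
  LinearMap.mkContinuous
    { toFun := fun g => (memLp_mul φ hφ g).toLp _
      map_add' := fun g h => by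
        refine Lp.ext ?_
        filter_upwards [MemLp.coeFn_toLp (memLp_mul φ hφ (g + h)),
          MemLp.coeFn_toLp (memLp_mul φ hφ g), MemLp.coeFn_toLp (memLp_mul φ hφ h),
          Lp.coeFn_add g h,
          Lp.coeFn_add ((memLp_mul φ hφ g).toLp _) ((memLp_mul φ hφ h).toLp _)]
          with x h1 h2 h3 h4 h5
        simp only [h1, h5, Pi.add_apply, h2, h3, h4, mul_add]
      map_smul' := fun a g => by
        refine Lp.ext ?_
        filter_upwards [MemLp.coeFn_toLp (memLp_mul φ hφ (a • g)),
          MemLp.coeFn_toLp (memLp_mul φ hφ g), Lp.coeFn_smul a g,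
          Lp.coeFn_smul a ((memLp_mul φ hφ g).toLp _)] with x h1 h2 h3 h4
        simp only [h1, h4, Pi.smul_apply, h2, h3, RingHom.id_apply, smul_eq_mul]
        ring }
    (eLpNorm φ ∞ μ).toReal
    (by
      intro g
      simp only [LinearMap.coe_mk, AddHom.coe_mk]
      rw [Lp.norm_toLp]
      have hb : eLpNorm (fun x => φ x * (g : X → ℂ) x) 2 μ ≤
          eLpNorm φ ∞ μ * eLpNorm (g : X → ℂ) 2 μ := by
        have := eLpNorm_smul_le_mul_eLpNorm (f := (g : X → ℂ)) (φ := φ)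
          (Lp.aestronglyMeasurable g) hφ.1 (p := ∞) (q := 2) (r := 2)
        rw [show (fun x => φ x * (g : X → ℂ) x) = φ * (g : X → ℂ) from rfl]
        simpa [Pi.smul_apply, smul_eq_mul] using this
      have hfin : eLpNorm φ ∞ μ * eLpNorm (g : X → ℂ) 2 μ ≠ ∞ :=
        ENNReal.mul_ne_top hφ.2.ne (Lp.memLp g).2.ne
      calc (eLpNorm (fun x => φ x * (g : X → ℂ) x) 2 μ).toReal
          ≤ (eLpNorm φ ∞ μ * eLpNorm (g : X → ℂ) 2 μ).toReal :=
            ENNReal.toReal_mono hfin hb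
        _ = (eLpNorm φ ∞ μ).toReal * ‖g‖ := by
            rw [ENNReal.toReal_mul, Lp.norm_def]
        )

lemma mulLp_coeFn (φ : X → ℂ) (hφ : MemLp φ ∞ μ) (g : Lp ℂ 2 μ) :
    (mulLp φ hφ g : X → ℂ) =ᵐ[μ] fun x => φ x * (g : X → ℂ) x :=
  MemLp.coeFn_toLp (memLp_mul φ hφ g)

end Stmt14

namespace Stmt14

variable {X : Type*} [MeasurableSpace X] {μ : Measure X}

lemma mulLp_congr (φ ψ : X → ℂ) (hφ : MemLp φ ∞ μ) (hψ : MemLp ψ ∞ μ)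
    (h : ∀ x, φ x = ψ x) : mulLp φ hφ = mulLp ψ hψ := by
  refine ContinuousLinearMap.ext fun g => Lp.ext ?_
  filter_upwards [mulLp_coeFn φ hφ g, mulLp_coeFn ψ hψ g] with x h1 h2
  rw [h1, h2, h x]

lemma mulLp_comp (φ ψ : X → ℂ) (hφ : MemLp φ ∞ μ) (hψ : MemLp ψ ∞ μ)
    (hm : MemLp (fun x => φ x * ψ x) ∞ μ) :
    mulLp φ hφ * mulLp ψ hψ = mulLp (fun x => φ x * ψ x) hm := by
  refine ContinuousLinearMap.ext fun g => Lp.ext ?_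
  have h1 := mulLp_coeFn φ hφ (mulLp ψ hψ g)
  have h2 := mulLp_coeFn ψ hψ g
  have h3 := mulLp_coeFn (fun x => φ x * ψ x) hm g
  rw [ContinuousLinearMap.mul_apply]
  filter_upwards [h1, h2, h3] with x h1 h2 h3
  rw [h1, h2, h3, mul_assoc]

lemma mulLp_one : mulLp (fun _ : X => (1 : ℂ)) (memLp_top_const 1) = (1 : Lp ℂ 2 μ →L[ℂ] Lp ℂ 2 μ) := by
  refine ContinuousLinearMap.ext fun g => Lp.ext ?_
  filter_upwards [mulLp_coeFn (fun _ : X => (1 : ℂ)) (memLp_top_const 1) g] with x h1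
  simp [h1]

lemma algebraMap_sub_mulLp (z : ℂ) (φ : X → ℂ) (hφ : MemLp φ ∞ μ)
    (hz : MemLp (fun x => z - φ x) ∞ μ) :
    algebraMap ℂ (Lp ℂ 2 μ →L[ℂ] Lp ℂ 2 μ) z - mulLp φ hφ = mulLp (fun x => z - φ x) hz := by
  refine ContinuousLinearMap.ext fun g => Lp.ext ?_
  rw [ContinuousLinearMap.sub_apply]
  have h0 : (algebraMap ℂ (Lp ℂ 2 μ →L[ℂ] Lp ℂ 2 μ) z) g = z • g := by
    rw [Algebra.algebraMap_eq_smul_one]; rfl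
  rw [h0]
  filter_upwards [mulLp_coeFn φ hφ g, mulLp_coeFn (fun x => z - φ x) hz g,
    Lp.coeFn_smul z g, Lp.coeFn_sub (z • g) (mulLp φ hφ g)] with x h1 h2 h3 h4
  rw [h4]
  simp only [Pi.sub_apply, h1, h2, h3, Pi.smul_apply, smul_eq_mul]
  ring

lemma isUnit_mulLp (φ ψ : X → ℂ) (hφ : MemLp φ ∞ μ) (hψ : MemLp ψ ∞ μ)
    (h : ∀ x, φ x * ψ x = 1) : IsUnit (mulLp (μ := μ) φ hφ) := by
  refine isUnit_iff_exists.mpr ⟨mulLp ψ hψ, ?_, ?_⟩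
  · rw [mulLp_comp φ ψ hφ hψ (by
      refine memLp_top_of_bound (hφ.1.mul hψ.1) 1 (ae_of_all _ fun x => by simp [h x])),
      ← mulLp_one]
    exact mulLp_congr _ _ _ _ h
  · rw [mulLp_comp ψ φ hψ hφ (by
      refine memLp_top_of_bound (hψ.1.mul hφ.1) 1
        (ae_of_all _ fun x => by rw [mul_comm, h x]; norm_num)), ← mulLp_one]
    exact mulLp_congr _ _ _ _ (fun x => by rw [mul_comm]; exact h x)

lemma mulLp_symmetric (φ : X → ℂ) (hφ : MemLp φ ∞ μ) (hreal : ∀ x, conj (φ x) = φ x)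
    (g h : Lp ℂ 2 μ) :
    @inner ℂ _ _ (mulLp φ hφ g) h = @inner ℂ _ _ g (mulLp φ hφ h) := by
  rw [MeasureTheory.L2.inner_def, MeasureTheory.L2.inner_def]
  refine integral_congr_ae ?_
  filter_upwards [mulLp_coeFn φ hφ g, mulLp_coeFn φ hφ h] with x h1 h2
  rw [h1, h2]
  simp only [RCLike.inner_apply, map_mul, hreal x]
  ring

end Stmt14

namespace Stmt14

/-- Coordinate evaluation on `ℓ²` as a continuous linear map. -/
def coordCLM (m : ℤ) : lp (fun _ : ℤ => ℂ) 2 →L[ℂ] ℂ :=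
  LinearMap.mkContinuous
    { toFun := fun u => u m
      map_add' := fun u v => by simp [lp.coeFn_add]
      map_smul' := fun a u => by simp [lp.coeFn_smul] }
    1
    (fun u => by
      show ‖u m‖ ≤ 1 * ‖u‖
      simpa using lp.norm_apply_le_norm (by norm_num : (2 : ℝ≥0∞) ≠ 0) u m)

@[simp] lemma coordCLM_apply (m : ℤ) (u : lp (fun _ : ℤ => ℂ) 2) : coordCLM m u = u m := rfl

lemma isUnit_conj_of {E F : Type*} [NormedAddCommGroup E] [NormedSpace ℂ E]
    [NormedAddCommGroup F] [NormedSpace ℂ F]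
    (U : E ≃ₗᵢ[ℂ] F) (A : E →L[ℂ] E) (B : F →L[ℂ] F)
    (h : ∀ x, B x = U (A (U.symm x))) (z : ℂ)
    (hA : IsUnit (algebraMap ℂ (E →L[ℂ] E) z - A)) :
    IsUnit (algebraMap ℂ (F →L[ℂ] F) z - B) := by
  obtain ⟨S, hS1, hS2⟩ := isUnit_iff_exists.mp hA
  have hU : ∀ y : E, (algebraMap ℂ (F →L[ℂ] F) z - B) (U y) = U ((algebraMap ℂ (E →L[ℂ] E) z - A) y) := by
    intro y
    simp only [ContinuousLinearMap.sub_apply, Algebra.algebraMap_eq_smul_one,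
      ContinuousLinearMap.smul_apply, ContinuousLinearMap.one_apply]
    rw [h (U y), U.symm_apply_apply, map_sub, U.map_smul]
  set S' : F →L[ℂ] F :=
    (U.toContinuousLinearEquiv.toContinuousLinearMap.comp S).comp
      U.symm.toContinuousLinearEquiv.toContinuousLinearMap with hS'
  refine isUnit_iff_exists.mpr ⟨S', ?_, ?_⟩
  · refine ContinuousLinearMap.ext fun x => ?_
    have : S' x = U (S (U.symm x)) := rfl
    rw [ContinuousLinearMap.mul_apply, this, hU (S (U.symm x))]
    have h1 : (algebraMap ℂ (E →L[ℂ] E) z - A) (S (U.symm x)) = U.symm x := by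
      have := congrArg (fun (f : E →L[ℂ] E) => f (U.symm x)) hS1
      simpa [ContinuousLinearMap.mul_apply] using this
    rw [h1]
    simp
  · refine ContinuousLinearMap.ext fun x => ?_
    rw [ContinuousLinearMap.mul_apply]
    have hx : (algebraMap ℂ (F →L[ℂ] F) z - B) x = U ((algebraMap ℂ (E →L[ℂ] E) z - A) (U.symm x)) := by
      have := hU (U.symm x); rwa [U.apply_symm_apply] at this
    rw [hx]
    have : ∀ y : F, S' y = U (S (U.symm y)) := fun y => rfl
    rw [this, U.symm_apply_apply]
    have h2 : S ((algebraMap ℂ (E →L[ℂ] E) z - A) (U.symm x)) = U.symm x := by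
      have := congrArg (fun (f : E →L[ℂ] E) => f (U.symm x)) hS2
      simpa [ContinuousLinearMap.mul_apply] using this
    rw [h2]
    simp

lemma fourierCoeff_congr_ae {T : ℝ} [hT : Fact (0 < T)] {g h : AddCircle T → ℂ}
    (hgh : g =ᵐ[AddCircle.haarAddCircle] h) (n : ℤ) : fourierCoeff g n = fourierCoeff h n := by
  unfold fourierCoeff
  refine integral_congr_ae ?_
  filter_upwards [hgh] with x hx
  rw [hx]

end Stmt14



open scoped Real ENNReal ComplexConjugate
open MeasureTheory

set_option maxHeartbeats 2000000 in
theorem stmt_14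
    (f : ℝ → ℝ)
    (hf_cont : Continuous f)
    (hf_per : Function.Periodic f (2 * π))
    (c : ℤ → ℂ)
    (hc : ∀ k : ℤ, c k = (1 / (2 * π)) * ∫ α in (0:ℝ)..(2 * π),
      ((f α : ℂ)) * Complex.exp (-(Complex.I) * (k : ℂ) * (α : ℂ)))
    (T : lp (fun _ : ℤ => ℂ) 2 →L[ℂ] lp (fun _ : ℤ => ℂ) 2)
    (hT : ∀ (u : lp (fun _ : ℤ => ℂ) 2) (m : ℤ),
      (Summable fun n : ℤ => c (m - n) * u n) ∧
        (T u) m = ∑' n : ℤ, c (m - n) * u n) :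
    IsSelfAdjoint T ∧
      spectrum ℂ T = (fun r : ℝ => (r : ℂ)) '' (f '' Set.Icc 0 (2 * π)) := by
  haveI : Fact (0 < 2 * π) := ⟨by positivity⟩
  set μ : Measure (AddCircle (2 * π)) := AddCircle.haarAddCircle with hμ
  have hfper' : Function.Periodic (fun α => (f α : ℂ)) (2 * π) := fun x => by
    simp [hf_per x]
  set F : AddCircle (2 * π) → ℂ := hfper'.lift with hF
  have hFcoe : ∀ α : ℝ, F (α : AddCircle (2 * π)) = (f α : ℂ) := fun α => hfper'.lift_coe α
  have hFcont : Continuous F :=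
    continuous_coinduced_dom.mpr (Complex.continuous_ofReal.comp hf_cont)
  -- the band
  set K : Set ℂ := (fun r : ℝ => (r : ℂ)) '' (f '' Set.Icc 0 (2 * π)) with hK
  have hKcomp : IsCompact K := (isCompact_Icc.image hf_cont).image Complex.continuous_ofReal
  have hFz : ∀ x : AddCircle (2 * π), F x ∈ K := by
    intro x
    induction x using QuotientAddGroup.induction_on with
    | H α =>
      obtain ⟨β, hβ, hfβ⟩ := hf_per.exists_mem_Ico₀ (by positivity) α
      exact ⟨f β, ⟨β, ⟨hβ.1, hβ.2.le⟩, rfl⟩, by rw [hFcoe, hfβ]⟩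
  have hconj : ∀ x, conj (F x) = F x := by
    intro x
    induction x using QuotientAddGroup.induction_on with
    | H α => rw [hFcoe]; exact Complex.conj_ofReal _
  -- boundedness
  obtain ⟨CF, hCF⟩ :=
    (isCompact_univ (X := AddCircle (2 * π))).exists_bound_of_continuousOn hFcont.continuousOn
  have hFmem : MemLp F ∞ μ :=
    memLp_top_of_bound hFcont.aestronglyMeasurable CF (ae_of_all _ fun x => hCF x trivial)
  set M := Stmt14.mulLp F hFmem with hM
  set U := (fourierBasis (T := 2 * π)).repr with hU
  -- Fourier coefficients
  have hck : ∀ k : ℤ, c k = fourierCoeff F k := by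
    intro k
    rw [hc k, fourierCoeff_eq_intervalIntegral F k 0, zero_add, Complex.real_smul]
    have h2π : (2 * π : ℂ) ≠ 0 := by
      simp only [ne_eq, mul_eq_zero, OfNat.ofNat_ne_zero, false_or]
      exact_mod_cast Real.pi_ne_zero
    congr 1
    · push_cast; ring
    refine intervalIntegral.integral_congr fun x hx => ?_
    rw [hFcoe x, smul_eq_mul, fourier_coe_apply, mul_comm]
    congr 2
    field_simp
    push_cast
    ring
  -- matrix elements
  have h4 : ∀ m n : ℤ, (U (M (fourierBasis n))) m = c (m - n) := by
    intro m n
    rw [hU, fourierBasis_repr]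
    have e2 : fourierCoeff (⇑(M ((fourierBasis (T := 2 * π)) n))) m
        = fourierCoeff (fun x => F x * fourier n x) m := by
      refine Stmt14.fourierCoeff_congr_ae ?_ m
      have hb : ((fourierBasis (T := 2 * π)) n : AddCircle (2 * π) → ℂ)
          =ᵐ[μ] fourier n := by
        rw [coe_fourierBasis]; exact coeFn_fourierLp 2 n
      filter_upwards [Stmt14.mulLp_coeFn F hFmem ((fourierBasis (T := 2 * π)) n), hb]
        with x h1 h2
      rw [h1, h2]
    rw [e2, hck (m - n)]
    unfold fourierCoeff
    refine integral_congr_ae (ae_of_all _ fun x => ?_)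
    show fourier (-m) x • (F x * fourier n x) = fourier (-(m - n)) x • F x
    rw [smul_eq_mul, smul_eq_mul]
    have hfa : fourier (-m) x * fourier n x = fourier (-(m - n)) x := by
      rw [← fourier_add]; congr 1; ring
    calc fourier (-m) x * (F x * fourier n x)
        = (fourier (-m) x * fourier n x) * F x := by ring
      _ = fourier (-(m - n)) x * F x := by rw [hfa]
  -- conjugation identity
  have hTspec : ∀ u, T u = U (M (U.symm u)) := by
    intro u
    apply lp.ext
    funext m
    rw [(hT u m).2]
    set g := U.symm u with hg
    have hugn : ∀ n : ℤ, u n = (fourierBasis (T := 2 * π)).repr g n := by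
      intro n
      rw [hg, ← hU, U.apply_symm_apply]
    have h1 : HasSum (fun n : ℤ => u n • ((fourierBasis (T := 2 * π)) n)) g := by
      have := (fourierBasis (T := 2 * π)).hasSum_repr g
      refine HasSum.congr_fun this fun n => ?_
      rw [hugn n]
    have h2 : HasSum (fun n : ℤ => u n • (M ((fourierBasis (T := 2 * π)) n))) (M g) := by
      have := h1.mapL M
      simpa only [ContinuousLinearMap.map_smul] using this
    have h3 : HasSum (fun n : ℤ => u n • ((Stmt14.coordCLM m) (U (M ((fourierBasis (T := 2 * π)) n)))))
        ((Stmt14.coordCLM m) (U (M g))) := by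
      have := h2.mapL ((Stmt14.coordCLM m).comp
        (U.toContinuousLinearEquiv.toContinuousLinearMap))
      simpa using this
    have h5 : HasSum (fun n : ℤ => u n * c (m - n)) ((U (M g)) m) := by
      have : (fun n : ℤ => u n • ((Stmt14.coordCLM m) (U (M ((fourierBasis (T := 2 * π)) n)))))
          = fun n : ℤ => u n * c (m - n) := by
        funext n
        rw [Stmt14.coordCLM_apply, h4 m n, smul_eq_mul]
      rw [this] at h3
      exact h3
    rw [← h5.tsum_eq]
    exact tsum_congr fun n => mul_comm _ _
  have hsa : IsSelfAdjoint T := by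
    rw [ContinuousLinearMap.isSelfAdjoint_iff_isSymmetric]
    intro u v
    simp only [ContinuousLinearMap.coe_coe]
    rw [hTspec u, hTspec v]
    calc @inner ℂ _ _ (U (M (U.symm u))) v
        = @inner ℂ _ _ (U (M (U.symm u))) (U (U.symm v)) := by rw [U.apply_symm_apply]
      _ = @inner ℂ _ _ (M (U.symm u)) (U.symm v) := U.inner_map_map _ _
      _ = @inner ℂ _ _ (U.symm u) (M (U.symm v)) := Stmt14.mulLp_symmetric F hFmem hconj _ _
      _ = @inner ℂ _ _ (U (U.symm u)) (U (M (U.symm v))) := (U.inner_map_map _ _).symm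
      _ = @inner ℂ _ _ u (U (M (U.symm v))) := by rw [U.apply_symm_apply]
  refine ⟨hsa, ?_⟩
  -- spectrum transfer
  have hspecTM : spectrum ℂ T = spectrum ℂ M := by
    ext z
    rw [spectrum.mem_iff, spectrum.mem_iff, not_iff_not]
    constructor
    · intro h
      refine Stmt14.isUnit_conj_of U.symm T M ?_ z h
      intro x
      rw [hTspec (U.symm.symm x)]
      simp only [LinearIsometryEquiv.symm_symm, LinearIsometryEquiv.symm_apply_apply]
    · intro h
      exact Stmt14.isUnit_conj_of U M T (fun x => hTspec x) z h
  rw [hspecTM]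
  -- spectrum of M is K
  apply Set.eq_of_subset_of_subset
  · -- σ(M) ⊆ K
    intro z hz
    by_contra hzK
    rw [spectrum.mem_iff] at hz
    apply hz
    obtain ⟨ε, hε, hball⟩ := Metric.isOpen_iff.mp hKcomp.isClosed.isOpen_compl z hzK
    have hlow : ∀ x, ε ≤ ‖z - F x‖ := by
      intro x
      by_contra hlt
      push_neg at hlt
      refine hball ?_ (hFz x)
      rw [Metric.mem_ball, dist_comm, Complex.dist_eq]
      exact hlt
    have hne : ∀ x, z - F x ≠ 0 := by
      intro x h0
      have := hlow x
      rw [h0, norm_zero] at this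
      exact absurd this (not_le.mpr hε)
    have hzF : MemLp (fun x => z - F x) ∞ μ := by
      refine memLp_top_of_bound ((continuous_const.sub hFcont).aestronglyMeasurable)
        (‖z‖ + CF) (ae_of_all _ fun x => ?_)
      exact (norm_sub_le _ _).trans ((add_le_add_iff_left _).mpr (hCF x trivial))
    have hψc : Continuous (fun x => (z - F x)⁻¹) :=
      (continuous_const.sub hFcont).inv₀ hne
    have hψb : MemLp (fun x => (z - F x)⁻¹) ∞ μ := by
      refine memLp_top_of_bound hψc.aestronglyMeasurable ε⁻¹ (ae_of_all _ fun x => ?_)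
      rw [norm_inv]
      exact inv_anti₀ hε (hlow x)
    rw [hM, Stmt14.algebraMap_sub_mulLp z F hFmem hzF]
    exact Stmt14.isUnit_mulLp _ _ hzF hψb (fun x => mul_inv_cancel₀ (hne x))
  · -- K ⊆ σ(M)
    intro z hzK
    obtain ⟨w, ⟨α₀, hα₀, rfl⟩, rfl⟩ := hzK
    show ((f α₀ : ℝ) : ℂ) ∈ spectrum ℂ M
    set z₀ : ℂ := ((f α₀ : ℝ) : ℂ) with hz₀
    rw [spectrum.mem_iff]
    intro hunit
    obtain ⟨S, hS1, hS2⟩ := isUnit_iff_exists.mp hunit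
    have hδpos : (0:ℝ) < (2 * (‖S‖ + 1))⁻¹ := by positivity
    set δ := (2 * (‖S‖ + 1))⁻¹ with hδ
    set V := F ⁻¹' Metric.ball z₀ δ with hV
    have hVopen : IsOpen V := hFcont.isOpen_preimage _ Metric.isOpen_ball
    have hx₀ : ((α₀ : AddCircle (2 * π))) ∈ V := by
      simp only [hV, Set.mem_preimage, hFcoe, Metric.mem_ball, dist_self]
      simpa [hz₀] using hδpos
    have hVpos : 0 < μ V := hVopen.measure_pos μ ⟨_, hx₀⟩
    have hVne : μ V ≠ ⊤ := measure_ne_top μ V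
    set g := indicatorConstLp 2 hVopen.measurableSet hVne (1 : ℂ) with hg
    have hgnorm : ‖g‖ = (μ V).toReal ^ ((1:ℝ)/2) := by
      rw [hg, norm_indicatorConstLp (by norm_num) (by norm_num), norm_one, one_mul]
      norm_num
      rfl
    have hgpos : 0 < ‖g‖ := by
      rw [hgnorm]
      exact Real.rpow_pos_of_pos (ENNReal.toReal_pos hVpos.ne' hVne) _
    have hzF : MemLp (fun x => z₀ - F x) ∞ μ := by
      refine memLp_top_of_bound ((continuous_const.sub hFcont).aestronglyMeasurable)
        (‖z₀‖ + CF) (ae_of_all _ fun x => ?_)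
      exact (norm_sub_le _ _).trans ((add_le_add_iff_left _).mpr (hCF x trivial))
    have hAg : ‖(algebraMap ℂ (Lp ℂ 2 μ →L[ℂ] Lp ℂ 2 μ) z₀ - M) g‖ ≤ δ * ‖g‖ := by
      rw [hM, Stmt14.algebraMap_sub_mulLp z₀ F hFmem hzF]
      have hmono : ‖Stmt14.mulLp _ hzF g‖ ≤ ‖(δ:ℂ) • g‖ := by
        rw [Lp.norm_def, Lp.norm_def]
        refine ENNReal.toReal_mono (Lp.eLpNorm_ne_top _) (eLpNorm_mono_ae ?_)
        filter_upwards [Stmt14.mulLp_coeFn _ hzF g,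
          indicatorConstLp_coeFn (p := 2) (μ := μ) (hs := hVopen.measurableSet)
            (hμs := hVne) (c := (1:ℂ)), Lp.coeFn_smul (δ:ℂ) g] with x h1 h2 h3
        rw [h1, h3, Pi.smul_apply, smul_eq_mul, norm_mul, norm_mul]
        by_cases hx : x ∈ V
        · have hdist : ‖z₀ - F x‖ ≤ δ := by
            have := hx
            rw [hV, Set.mem_preimage, Metric.mem_ball, Complex.dist_eq] at this
            rw [show z₀ - F x = -(F x - z₀) by ring, norm_neg]
            exact this.le
          have hδn : ‖((δ:ℝ):ℂ)‖ = δ := by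
            rw [Complex.norm_real, Real.norm_eq_abs, abs_of_pos hδpos]
          rw [hδn]
          exact mul_le_mul_of_nonneg_right hdist (norm_nonneg _)
        · rw [h2, Set.indicator_of_notMem hx, norm_zero, mul_zero, mul_zero]
      have hsmul : ‖(δ:ℂ) • g‖ = δ * ‖g‖ := by
        rw [norm_smul, Complex.norm_real, Real.norm_eq_abs, abs_of_pos hδpos]
      rw [← hsmul]
      exact hmono
    have hgid : g = S ((algebraMap ℂ (Lp ℂ 2 μ →L[ℂ] Lp ℂ 2 μ) z₀ - M) g) := by
      have h := congrArg (fun (A : Lp ℂ 2 μ →L[ℂ] Lp ℂ 2 μ) => A g) hS2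
      simpa only [ContinuousLinearMap.mul_apply, ContinuousLinearMap.one_apply] using h.symm
    have hfin : ‖g‖ ≤ ‖S‖ * (δ * ‖g‖) := by
      calc ‖g‖ = ‖S ((algebraMap ℂ (Lp ℂ 2 μ →L[ℂ] Lp ℂ 2 μ) z₀ - M) g)‖ := by rw [← hgid]
        _ ≤ ‖S‖ * ‖(algebraMap ℂ (Lp ℂ 2 μ →L[ℂ] Lp ℂ 2 μ) z₀ - M) g‖ := S.le_opNorm _
        _ ≤ ‖S‖ * (δ * ‖g‖) := mul_le_mul_of_nonneg_left hAg (norm_nonneg S)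
    have hlt1 : ‖S‖ * δ < 1 := by
      have h2 : (0:ℝ) < 2 * (‖S‖ + 1) := by positivity
      have := (div_lt_one h2).mpr (by nlinarith [norm_nonneg S])
      rw [div_eq_mul_inv] at this
      exact this
    have : ‖S‖ * (δ * ‖g‖) < ‖g‖ := by
      calc ‖S‖ * (δ * ‖g‖) = (‖S‖ * δ) * ‖g‖ := by ring
        _ < 1 * ‖g‖ := mul_lt_mul_of_pos_right hlt1 hgpos
        _ = ‖g‖ := one_mul _
    exact absurd hfin (not_le.mpr this)
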